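/- Let z be a unit vector in C^n that is (δ,ρ)-incompressible, meaning its real representation hat(z) in R^{2n} is at distance more than ρ (in Euclidean norm) from every vector of R^{2n} with support of size at most 2δn. Then there exist constants ν_1, ν_2, ν_3 > 0 depending only on δ and ρ, and a set σ ⊆ {1,...,2n} with |σ| ≥ ν_1 n, such that ν_2/√n ≤ |hat(z)_k| ≤ ν_3/√n for all k in σ. -/

import Mathlib

set_option maxHeartbeats 1000000


open Finset

noncomputable def hatv {n : ℕ} (a : Fin n → ℂ) : Fin n ⊕ Fin n → ℝ :=
  Sum.elim (fun j => (a j).re) (fun j => (a j).im)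

/-- `z` on the complex unit sphere is `(δ,ρ)`-incompressible: `hat(z)` is at
Euclidean distance more than `ρ` from every vector of support at most `2δn`. -/
def Incompressible {n : ℕ} (δ ρ : ℝ) (z : Fin n → ℂ) : Prop :=
  ∀ y : Fin n ⊕ Fin n → ℝ,
    ((Finset.univ.filter (fun k => y k ≠ 0)).card : ℝ) ≤ 2 * δ * n →
    ρ < Real.sqrt (∑ k, (hatv z k - y k) ^ 2)

/-- spread lemma: every `(δ,ρ)`-incompressible unit vector has a
spread set `σ` of at least `ν₁ n` coordinates with `ν₂/√n ≤ |hat(z)_k| ≤ ν₃/√n`. -/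
theorem stmt4 (δ ρ : ℝ) (hδ : δ ∈ Set.Ioo (0:ℝ) 1) (hρ : ρ ∈ Set.Ioo (0:ℝ) 1) :
    ∃ ν₁ ν₂ ν₃ : ℝ, 0 < ν₁ ∧ 0 < ν₂ ∧ 0 < ν₃ ∧
      ∀ n : ℕ, ∀ z : Fin n → ℂ,
        Real.sqrt (∑ j, ‖z j‖ ^ 2) = 1 →
        Incompressible δ ρ z →
        ∃ σ : Finset (Fin n ⊕ Fin n), ν₁ * n ≤ (σ.card : ℝ) ∧
          ∀ k ∈ σ, ν₂ / Real.sqrt n ≤ |hatv z k| ∧ |hatv z k| ≤ ν₃ / Real.sqrt n := by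
  obtain ⟨hδ0, hδ1⟩ := hδ
  obtain ⟨hρ0, hρ1⟩ := hρ
  have hsd : (0:ℝ) < Real.sqrt (2*δ) := Real.sqrt_pos.mpr (by linarith)
  refine ⟨δ * ρ^2, ρ/2, 1 / Real.sqrt (2*δ), by positivity, by positivity, by positivity, ?_⟩
  intro n z hz hinc
  set c : ℝ := 1 / Real.sqrt (2*δ) with hc
  have hc0 : 0 < c := by positivity
  have hc2 : c^2 = 1/(2*δ) := by
    rw [hc, div_pow, one_pow, Real.sq_sqrt (by linarith)]
  rcases Nat.eq_zero_or_pos n with hn | hn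
  · exfalso
    subst hn
    simp at hz
  have hnR : (0:ℝ) < n := by exact_mod_cast hn
  have hsqn : 0 < Real.sqrt n := Real.sqrt_pos.mpr hnR
  have hsq2 : Real.sqrt n ^ 2 = (n:ℝ) := Real.sq_sqrt hnR.le
  -- norm 1
  have h1 : (∑ j, ‖z j‖^2) = 1 := by
    have hS : 0 ≤ ∑ j, ‖z j‖^2 :=
      Finset.sum_nonneg fun j _ => sq_nonneg _
    have h := Real.sq_sqrt hS
    rw [hz] at h
    simpa using h.symm
  have hsum : ∑ k, hatv z k ^ 2 = 1 := by
    rw [Fintype.sum_sum_type]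
    simp only [hatv, Sum.elim_inl, Sum.elim_inr]
    rw [← Finset.sum_add_distrib, ← h1]
    refine Finset.sum_congr rfl fun j _ => ?_
    rw [Complex.sq_norm, Complex.normSq_apply]; ring
  -- the large-coordinate set
  set T := univ.filter (fun k => c / Real.sqrt n < |hatv z k|) with hT
  have hfT : ∀ k ∈ T, (c / Real.sqrt n)^2 ≤ hatv z k ^ 2 := by
    intro k hk
    have hk' := (Finset.mem_filter.mp hk).2
    have h0 : 0 ≤ c / Real.sqrt n := by positivity
    nlinarith [sq_abs (hatv z k), abs_nonneg (hatv z k)]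
  have hTcard : (T.card : ℝ) ≤ 2 * δ * n := by
    have hA : (T.card : ℝ) * (c / Real.sqrt n)^2 ≤ ∑ k ∈ T, hatv z k ^ 2 := by
      rw [← nsmul_eq_mul]
      exact Finset.card_nsmul_le_sum T _ _ hfT
    have hB : ∑ k ∈ T, hatv z k ^ 2 ≤ 1 := by
      rw [← hsum]
      exact Finset.sum_le_sum_of_subset_of_nonneg (Finset.subset_univ _)
        (fun k _ _ => by positivity)
    rw [div_pow, hsq2, hc2] at hA
    have hAB : (T.card:ℝ) * (1/(2*δ)/n) ≤ 1 := le_trans hA hB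
    have hpos : (0:ℝ) < 2*δ*n := by positivity
    rw [div_div, mul_one_div] at hAB
    exact (div_le_one hpos).mp hAB
  -- incompressibility gives mass off T
  have hstep : ρ^2 < ∑ k ∈ univ.filter (fun k => k ∉ T), hatv z k ^ 2 := by
    set y : Fin n ⊕ Fin n → ℝ := fun k => if k ∈ T then hatv z k else 0 with hy
    have hsupp : univ.filter (fun k => y k ≠ 0) ⊆ T := by
      intro k hk
      simp only [Finset.mem_filter, hy] at hk
      by_contra h
      simp [h] at hk
    have hcard : ((univ.filter (fun k => y k ≠ 0)).card : ℝ) ≤ 2*δ*n :=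
      le_trans (by exact_mod_cast Finset.card_le_card hsupp) hTcard
    have h4 := hinc y hcard
    have h5 : ρ^2 < ∑ k, (hatv z k - y k)^2 := (Real.lt_sqrt hρ0.le).mp h4
    have heq : ∑ k, (hatv z k - y k)^2
        = ∑ k ∈ univ.filter (fun k => k ∉ T), hatv z k ^ 2 := by
      rw [← Finset.sum_filter_add_sum_filter_not univ (fun k => k ∈ T)
        (fun k => (hatv z k - y k)^2)]
      have e1 : ∑ k ∈ univ.filter (fun k => k ∈ T), (hatv z k - y k)^2 = 0 :=
        Finset.sum_eq_zero fun k hk => by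
          simp [hy, (Finset.mem_filter.mp hk).2]
      have e2 : ∑ k ∈ univ.filter (fun k => k ∉ T), (hatv z k - y k)^2
          = ∑ k ∈ univ.filter (fun k => k ∉ T), hatv z k ^ 2 :=
        Finset.sum_congr rfl fun k hk => by
          simp [hy, (Finset.mem_filter.mp hk).2]
      rw [e1, e2, zero_add]
    rwa [heq] at h5
  -- the spread set
  set σ := univ.filter
    (fun k => ρ/2 / Real.sqrt n ≤ |hatv z k| ∧ |hatv z k| ≤ c / Real.sqrt n) with hσ
  refine ⟨σ, ?_, fun k hk => (Finset.mem_filter.mp hk).2⟩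
  -- bound the off-T mass by σ plus small coordinates
  have hb1 : ∑ k ∈ univ.filter (fun k => k ∉ T), hatv z k ^ 2
      ≤ (σ.card:ℝ) * (c^2/n) + ρ^2/2 := by
    rw [← Finset.sum_filter_add_sum_filter_not (univ.filter (fun k => k ∉ T))
      (fun k => k ∈ σ) (fun k => hatv z k ^ 2)]
    have hpart1 : ∑ k ∈ (univ.filter (fun k => k ∉ T)).filter (fun k => k ∈ σ),
        hatv z k ^ 2 ≤ (σ.card:ℝ) * (c^2/n) := by
      have hsub : (univ.filter (fun k => k ∉ T)).filter (fun k => k ∈ σ) ⊆ σ := by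
        intro k hk
        exact (Finset.mem_filter.mp hk).2
      calc ∑ k ∈ (univ.filter (fun k => k ∉ T)).filter (fun k => k ∈ σ), hatv z k ^ 2
          ≤ ∑ k ∈ σ, hatv z k ^ 2 :=
            Finset.sum_le_sum_of_subset_of_nonneg hsub (fun k _ _ => by positivity)
        _ ≤ (σ.card:ℝ) * (c^2/n) := by
            rw [← nsmul_eq_mul]
            apply Finset.sum_le_card_nsmul
            intro k hk
            have hk' := (Finset.mem_filter.mp hk).2.2
            have h0 : 0 ≤ |hatv z k| := abs_nonneg _
            have : hatv z k ^ 2 ≤ (c / Real.sqrt n)^2 := by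
              nlinarith [sq_abs (hatv z k)]
            rw [div_pow, hsq2] at this
            exact this
    have hpart2 : ∑ k ∈ (univ.filter (fun k => k ∉ T)).filter (fun k => k ∉ σ),
        hatv z k ^ 2 ≤ ρ^2/2 := by
      have hterm : ∀ k ∈ (univ.filter (fun k => k ∉ T)).filter (fun k => k ∉ σ),
          hatv z k ^ 2 ≤ ρ^2/(4*n) := by
        intro k hk
        obtain ⟨hk1, hk2⟩ := Finset.mem_filter.mp hk
        have hkT : k ∉ T := (Finset.mem_filter.mp hk1).2
        have hup : |hatv z k| ≤ c / Real.sqrt n := by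
          by_contra h
          exact hkT (Finset.mem_filter.mpr ⟨Finset.mem_univ _, lt_of_not_ge h⟩)
        have hlow : ¬ (ρ/2 / Real.sqrt n ≤ |hatv z k|) := by
          intro h
          exact hk2 (Finset.mem_filter.mpr ⟨Finset.mem_univ _, h, hup⟩)
        have hlow' : |hatv z k| < ρ/2 / Real.sqrt n := lt_of_not_ge hlow
        have h0 : 0 ≤ |hatv z k| := abs_nonneg _
        have : hatv z k ^ 2 ≤ (ρ/2 / Real.sqrt n)^2 := by
          nlinarith [sq_abs (hatv z k)]
        rw [div_pow, hsq2] at this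
        calc hatv z k ^ 2 ≤ (ρ/2)^2 / n := this
          _ = ρ^2/(4*n) := by ring
      calc ∑ k ∈ (univ.filter (fun k => k ∉ T)).filter (fun k => k ∉ σ), hatv z k ^ 2
          ≤ ((univ.filter (fun k => k ∉ T)).filter (fun k => k ∉ σ)).card • (ρ^2/(4*n)) :=
            Finset.sum_le_card_nsmul _ _ _ hterm
        _ ≤ (2*n) * (ρ^2/(4*n)) := by
            rw [nsmul_eq_mul]
            apply mul_le_mul_of_nonneg_right _ (by positivity)
            have hcard2 : ((univ.filter (fun k => k ∉ T)).filter (fun k => k ∉ σ)).card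
                ≤ Fintype.card (Fin n ⊕ Fin n) :=
              Finset.card_le_card (Finset.subset_univ _) |>.trans_eq (Finset.card_univ)
            have : (Fintype.card (Fin n ⊕ Fin n) : ℝ) = 2 * n := by
              simp [Fintype.card_sum]; ring
            calc (((univ.filter (fun k => k ∉ T)).filter (fun k => k ∉ σ)).card : ℝ)
                ≤ (Fintype.card (Fin n ⊕ Fin n) : ℝ) := by exact_mod_cast hcard2
              _ = 2 * n := this
        _ = ρ^2/2 := by field_simp; ring
    linarith
  -- conclude
  have hmain : ρ^2/2 < (σ.card:ℝ) * (c^2/n) := by linarith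
  rw [hc2] at hmain
  have h2δ : (0:ℝ) < 2*δ := by linarith
  -- ρ²/2 < σ.card /(2δ n)  ⇒  δ ρ² n ≤ σ.card
  rw [div_div, mul_one_div] at hmain
  have hfin := (lt_div_iff₀ (by positivity : (0:ℝ) < 2*δ*n)).mp hmain
  nlinarith [hfin]
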